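/- Let (A[[ν]],⋆) be a formal deformation of A. Then the bracket {·,·}_1 restricted to the center satisfies the Jacobi identity: for all a, b, c ∈ Z(A), {{a,b}_1, c}_1 + {{b,c}_1, a}_1 + {{c,a}_1, b}_1 = 0. (This is well defined since {a,b}_1 ∈ Z(A) for a, b ∈ Z(A).) Thus (Z(A), {·,·}_1) is a commutative Poisson algebra, the reduced Poisson algebra of the deformation. -/

import Mathlib

open PowerSeries

/-- A formal deformation `(A⟦ν⟧, ⋆)` of an associative unital `R`-algebra `A`:
an `R⟦ν⟧`-bilinear, associative, unital (with unit the constant series `1`)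
multiplication `⋆` on the `R⟦ν⟧`-module `A⟦ν⟧`, such that `a ⋆ b ≡ a * b (mod ν·A⟦ν⟧)`
for all `a, b : A` (viewed as constant power series).  The `R⟦ν⟧`-module structure on
`A⟦ν⟧` is given by `c • P = (map (algebraMap R A) c) * P`. -/
structure FormalDeformation (R A : Type*) [CommRing R] [Ring A] [Algebra R A] where
  star : PowerSeries A → PowerSeries A → PowerSeries A
  add_star : ∀ P Q S, star (P + Q) S = star P S + star Q S
  star_add : ∀ P Q S, star P (Q + S) = star P Q + star P S
  smul_star : ∀ (c : PowerSeries R) (P Q : PowerSeries A),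
      star (PowerSeries.map (algebraMap R A) c * P) Q
        = PowerSeries.map (algebraMap R A) c * star P Q
  star_smul : ∀ (c : PowerSeries R) (P Q : PowerSeries A),
      star P (PowerSeries.map (algebraMap R A) c * Q)
        = PowerSeries.map (algebraMap R A) c * star P Q
  star_assoc : ∀ P Q S, star (star P Q) S = star P (star Q S)
  one_star : ∀ P, star 1 P = P
  star_one : ∀ P, star P 1 = P
  star_deform : ∀ a b : A,
      constantCoeff (star (C a) (C b)) = a * b

namespace FormalDeformation

variable {R A : Type*} [CommRing R] [Ring A] [Algebra R A]

/-- `(a,b)ᵢ` : the coefficient of `νⁱ` in `a ⋆ b`, for `a b : A`. -/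
noncomputable def prodCoeff (D : FormalDeformation R A) (i : ℕ) (a b : A) : A :=
  coeff i (D.star (C a) (C b))

/-- `{a,b}ᵢ` : the coefficient of `νⁱ` in `a ⋆ b − b ⋆ a`, for `a b : A`. -/
noncomputable def brkt (D : FormalDeformation R A) (i : ℕ) (a b : A) : A :=
  coeff i (D.star (C a) (C b) - D.star (C b) (C a))

end FormalDeformation

/-- `H_ν = Z(A) + ν·A⟦ν⟧` : the power series whose constant term is central in `A`. -/
def Hnu (A : Type*) [Ring A] : Set (PowerSeries A) :=
  {P | constantCoeff P ∈ Set.center A}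

namespace FormalDeformation

variable {R A : Type*} [CommRing R] [Ring A] [Algebra R A] (D : FormalDeformation R A)

lemma coeff_one_X_mul' (φ : PowerSeries A) :
    coeff 1 (X * φ) = constantCoeff φ := by
  simpa using coeff_succ_X_mul 0 φ

lemma coeff_two_X_mul' (φ : PowerSeries A) :
    coeff 2 (X * φ) = coeff 1 φ := by
  simpa using coeff_succ_X_mul 1 φ

lemma star_zero' (P : PowerSeries A) : D.star P 0 = 0 := by
  have h := D.star_add P 0 0
  rw [add_zero] at h
  exact left_eq_add.mp h

lemma zero_star' (P : PowerSeries A) : D.star 0 P = 0 := by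
  have h := D.add_star 0 0 P
  rw [add_zero] at h
  exact left_eq_add.mp h

lemma star_neg' (P Q : PowerSeries A) : D.star P (-Q) = -D.star P Q := by
  have h := D.star_add P Q (-Q)
  rw [add_neg_cancel, D.star_zero'] at h
  exact eq_neg_of_add_eq_zero_right h.symm

lemma neg_star' (P Q : PowerSeries A) : D.star (-P) Q = -D.star P Q := by
  have h := D.add_star P (-P) Q
  rw [add_neg_cancel, D.zero_star'] at h
  exact eq_neg_of_add_eq_zero_right h.symm

lemma star_sub' (P Q S : PowerSeries A) : D.star P (Q - S) = D.star P Q - D.star P S := by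
  rw [sub_eq_add_neg, D.star_add, D.star_neg', sub_eq_add_neg]

lemma sub_star' (P Q S : PowerSeries A) : D.star (P - Q) S = D.star P S - D.star Q S := by
  rw [sub_eq_add_neg, D.add_star, D.neg_star', sub_eq_add_neg]

lemma star_X_mul (P Q : PowerSeries A) : D.star (X * P) Q = X * D.star P Q := by
  have h := D.smul_star X P Q
  rwa [PowerSeries.map_X] at h

lemma star_mul_X (P Q : PowerSeries A) : D.star P (X * Q) = X * D.star P Q := by
  have h := D.star_smul X P Q
  rwa [PowerSeries.map_X] at h

/-- The `⋆`-commutator. -/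
noncomputable def comm (P Q : PowerSeries A) : PowerSeries A :=
  D.star P Q - D.star Q P

lemma brkt_eq_coeff_comm (i : ℕ) (a b : A) :
    D.brkt i a b = coeff i (D.comm (C a) (C b)) := rfl

lemma comm_X_mul (P Q : PowerSeries A) : D.comm (X * P) Q = X * D.comm P Q := by
  simp only [comm, D.star_X_mul, D.star_mul_X, mul_sub]

lemma comm_mul_X (P Q : PowerSeries A) : D.comm P (X * Q) = X * D.comm P Q := by
  simp only [comm, D.star_X_mul, D.star_mul_X, mul_sub]

lemma add_comm' (P Q S : PowerSeries A) : D.comm (P + Q) S = D.comm P S + D.comm Q S := by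
  simp only [comm, D.add_star, D.star_add]; abel

lemma comm_add' (P Q S : PowerSeries A) : D.comm P (Q + S) = D.comm P Q + D.comm P S := by
  simp only [comm, D.add_star, D.star_add]; abel

lemma comm_sub' (P Q S : PowerSeries A) : D.comm P (Q - S) = D.comm P Q - D.comm P S := by
  simp only [comm, D.sub_star', D.star_sub']; abel

lemma comm_jacobi (P Q S : PowerSeries A) :
    D.comm (D.comm P Q) S + D.comm (D.comm Q S) P + D.comm (D.comm S P) Q = 0 := by
  simp only [comm, D.sub_star', D.star_sub', D.star_assoc]
  abel

lemma comm_leibniz (P Q S : PowerSeries A) :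
    D.comm P (D.star Q S) = D.star (D.comm P Q) S + D.star Q (D.comm P S) := by
  simp only [comm, D.sub_star', D.star_sub', D.star_assoc]
  abel

lemma coeff_zero_star (P Q : PowerSeries A) :
    constantCoeff (D.star P Q) = constantCoeff P * constantCoeff Q := by
  conv_lhs => rw [P.eq_X_mul_shift_add_const, Q.eq_X_mul_shift_add_const]
  simp only [D.add_star, D.star_add, D.star_X_mul, D.star_mul_X, map_add, map_mul,
    constantCoeff_X, zero_mul, D.star_deform, zero_add, add_zero]

lemma coeff_zero_comm (P Q : PowerSeries A) :
    constantCoeff (D.comm P Q) =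
      constantCoeff P * constantCoeff Q - constantCoeff Q * constantCoeff P := by
  simp [comm, D.coeff_zero_star]

lemma exists_shift (P : PowerSeries A) (h : constantCoeff P = 0) :
    ∃ Q, P = X * Q ∧ constantCoeff Q = coeff 1 P := by
  refine ⟨PowerSeries.mk fun p => coeff (p + 1) P, ?_, ?_⟩
  · conv_lhs => rw [P.eq_X_mul_shift_add_const]
    rw [h, map_zero, add_zero]
  · simp [constantCoeff_mk]

lemma coeff_zero_comm_C_left_central (a : A) (ha : a ∈ Set.center A) (P : PowerSeries A) :
    constantCoeff (D.comm (C a) P) = 0 := by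
  rw [D.coeff_zero_comm, constantCoeff_C, sub_eq_zero,
    Semigroup.mem_center_iff.mp ha (constantCoeff P)]

lemma coeff_zero_comm_C_right_central (a : A) (ha : a ∈ Set.center A) (P : PowerSeries A) :
    constantCoeff (D.comm P (C a)) = 0 := by
  rw [D.coeff_zero_comm, constantCoeff_C, sub_eq_zero,
    Semigroup.mem_center_iff.mp ha (constantCoeff P)]

/-- Key: the `ν`-coefficient of the commutator of `S` with a central constant is the bracket
of the constant coefficient of `S` with that constant. -/
lemma coeff_one_comm_C_central (S : PowerSeries A) (c : A) (hc : c ∈ Set.center A) :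
    coeff 1 (D.comm S (C c)) = D.brkt 1 (constantCoeff S) c := by
  conv_lhs => rw [S.eq_X_mul_shift_add_const]
  rw [D.add_comm', map_add, D.comm_X_mul, coeff_one_X_mul',
    D.coeff_zero_comm_C_right_central c hc, zero_add, brkt_eq_coeff_comm]

lemma brkt_central (a b : A) (ha : a ∈ Set.center A)
    (hb : b ∈ Set.center A) : D.brkt 1 a b ∈ Set.center A := by
  rw [Semigroup.mem_center_iff]
  intro x
  have hJ := congrArg (coeff 1) (D.comm_jacobi (C a) (C b) (C x))
  rw [map_add, map_add, map_zero] at hJ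
  obtain ⟨S, hS, hS0⟩ := exists_shift _ (D.coeff_zero_comm_C_left_central a ha (C b))
  obtain ⟨T, hT, _⟩ := exists_shift _ (D.coeff_zero_comm_C_left_central b hb (C x))
  obtain ⟨U, hU, _⟩ := exists_shift _ (D.coeff_zero_comm_C_right_central a ha (C x))
  rw [hS, hT, hU, D.comm_X_mul, D.comm_X_mul, D.comm_X_mul,
    coeff_one_X_mul', coeff_one_X_mul', coeff_one_X_mul',
    D.coeff_zero_comm, D.coeff_zero_comm, D.coeff_zero_comm,
    constantCoeff_C, constantCoeff_C, constantCoeff_C] at hJ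
  rw [Semigroup.mem_center_iff] at ha hb
  rw [ha (constantCoeff T), hb (constantCoeff U)] at hJ
  simp only [sub_self, add_zero] at hJ
  have hs : constantCoeff S = D.brkt 1 a b := by
    rw [hS0, brkt_eq_coeff_comm, hS, coeff_one_X_mul']
  rw [hs] at hJ
  exact (sub_eq_zero.mp hJ).symm

lemma brkt_skew (a b : A) : D.brkt 1 a b = -D.brkt 1 b a := by
  rw [brkt, brkt, ← map_neg, neg_sub]

lemma brkt_leibniz (a b c : A) (ha : a ∈ Set.center A) :
    D.brkt 1 a (b * c) = b * D.brkt 1 a c + D.brkt 1 a b * c := by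
  obtain ⟨W, hW, _⟩ := exists_shift (D.star (C b) (C c) - C (b * c))
    (by rw [map_sub, D.coeff_zero_star, constantCoeff_C, constantCoeff_C, constantCoeff_C,
      sub_self])
  have hC : C (b * c) = D.star (C b) (C c) - X * W := by
    rw [← hW, sub_sub_cancel]
  obtain ⟨S, hS, hS0⟩ := exists_shift _ (D.coeff_zero_comm_C_left_central a ha (C b))
  obtain ⟨T, hT, hT0⟩ := exists_shift _ (D.coeff_zero_comm_C_left_central a ha (C c))
  rw [brkt_eq_coeff_comm, hC, D.comm_sub', D.comm_mul_X, map_sub, coeff_one_X_mul',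
    D.coeff_zero_comm_C_left_central a ha, sub_zero, D.comm_leibniz, map_add,
    hS, hT, D.star_X_mul, D.star_mul_X, coeff_one_X_mul', coeff_one_X_mul',
    D.coeff_zero_star, D.coeff_zero_star, constantCoeff_C, constantCoeff_C]
  rw [hS0, hT0, brkt_eq_coeff_comm, brkt_eq_coeff_comm, hS, hT,
    coeff_one_X_mul', coeff_one_X_mul'] at *
  rw [hS0, hT0]
  rw [add_comm]

lemma brkt_jacobi (a b c : A) (ha : a ∈ Set.center A) (hb : b ∈ Set.center A)
    (hc : c ∈ Set.center A) :
    D.brkt 1 (D.brkt 1 a b) c + D.brkt 1 (D.brkt 1 b c) a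
      + D.brkt 1 (D.brkt 1 c a) b = 0 := by
  have hJ := congrArg (coeff 2) (D.comm_jacobi (C a) (C b) (C c))
  rw [map_add, map_add, map_zero] at hJ
  obtain ⟨S, hS, hS0⟩ := exists_shift _ (D.coeff_zero_comm_C_left_central a ha (C b))
  obtain ⟨T, hT, hT0⟩ := exists_shift _ (D.coeff_zero_comm_C_left_central b hb (C c))
  obtain ⟨U, hU, hU0⟩ := exists_shift _ (D.coeff_zero_comm_C_left_central c hc (C a))
  rw [hS, hT, hU, D.comm_X_mul, D.comm_X_mul, D.comm_X_mul,
    coeff_two_X_mul', coeff_two_X_mul', coeff_two_X_mul',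
    D.coeff_one_comm_C_central S c hc, D.coeff_one_comm_C_central T a ha,
    D.coeff_one_comm_C_central U b hb] at hJ
  have hs : constantCoeff S = D.brkt 1 a b := by
    rw [hS0, brkt_eq_coeff_comm, hS, coeff_one_X_mul']
  have ht : constantCoeff T = D.brkt 1 b c := by
    rw [hT0, brkt_eq_coeff_comm, hT, coeff_one_X_mul']
  have hu : constantCoeff U = D.brkt 1 c a := by
    rw [hU0, brkt_eq_coeff_comm, hU, coeff_one_X_mul']
  rw [hs, ht, hu] at hJ
  exact hJ

end FormalDeformation

/-- the bracket `{·,·}₁` restricted to `Z(A)` makes `Z(A)` a commutative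
Poisson algebra (the reduced Poisson algebra): it takes values in `Z(A)`, is
skew-symmetric, satisfies the Leibniz identity and the Jacobi identity on `Z(A)`. -/
theorem reduced_poisson_algebra {R A : Type*} [CommRing R] [Ring A] [Algebra R A]
    (D : FormalDeformation R A) :
    (∀ a b : A, a ∈ Set.center A → b ∈ Set.center A → D.brkt 1 a b ∈ Set.center A) ∧
    (∀ a b : A, a ∈ Set.center A → b ∈ Set.center A → D.brkt 1 a b = -D.brkt 1 b a) ∧
    (∀ a b c : A, a ∈ Set.center A → b ∈ Set.center A → c ∈ Set.center A →
      D.brkt 1 a (b * c) = b * D.brkt 1 a c + D.brkt 1 a b * c) ∧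
    (∀ a b c : A, a ∈ Set.center A → b ∈ Set.center A → c ∈ Set.center A →
      D.brkt 1 (D.brkt 1 a b) c + D.brkt 1 (D.brkt 1 b c) a
        + D.brkt 1 (D.brkt 1 c a) b = 0) := by
  refine ⟨D.brkt_central, fun a b _ _ => D.brkt_skew a b,
    fun a b c ha _ _ => D.brkt_leibniz a b c ha, D.brkt_jacobi⟩
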